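/- arXiv:1912.03327 — 8 statements merged into one kernel-verified Lean document; each statement's English description precedes it below -/
import Mathlib

section
/- Let P be a separative partial order satisfying the κ-chain condition (every antichain has size < κ). Then for every subset Q of P there is a subset Q' of Q with |Q'| < κ such that the set of common lower bounds of Q' equals the set of common lower bounds of Q. -/
open Cardinal

/-- In a separative poset with the κ-chain condition, every subset `Q`
has a subset `Q'` of size `< κ` with the same set of common lower bounds. -/
theorem stmt_0 {P : Type*} [PartialOrder P] (κ : Cardinal)
    (sep : ∀ p q : P, ¬ q ≤ p → ∃ r, r ≤ q ∧ ¬ ∃ t : P, t ≤ r ∧ t ≤ p)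
    (cc : ∀ A : Set P, (∀ p ∈ A, ∀ q ∈ A, p ≠ q → ¬ ∃ t : P, t ≤ p ∧ t ≤ q) → #A < κ)
    (Q : Set P) :
    ∃ Q' ⊆ Q, #Q' < κ ∧
      {p : P | ∀ q ∈ Q', p ≤ q} = {p : P | ∀ q ∈ Q, p ≤ q} := by
  classical
  -- S : elements incompatible with some element of Q
  set S : Set P := {r | ∃ q ∈ Q, ¬ ∃ t : P, t ≤ r ∧ t ≤ q} with hS
  -- collection of antichains contained in S
  set 𝒜 : Set (Set P) :=
    {A | A ⊆ S ∧ ∀ p ∈ A, ∀ q ∈ A, p ≠ q → ¬ ∃ t : P, t ≤ p ∧ t ≤ q} with h𝒜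
  obtain ⟨A, hA⟩ : ∃ A, Maximal (· ∈ 𝒜) A := by
    apply zorn_subset
    intro c hc hchain
    refine ⟨⋃₀ c, ⟨?_, ?_⟩, fun s hs => Set.subset_sUnion_of_mem hs⟩
    · intro r hr
      obtain ⟨s, hs, hrs⟩ := hr
      exact (hc hs).1 hrs
    · rintro p ⟨s, hs, hps⟩ q ⟨s', hs', hqs'⟩ hpq
      rcases hchain.total hs hs' with h | h
      · exact (hc hs').2 p (h hps) q hqs' hpq
      · exact (hc hs).2 p hps q (h hqs') hpq
  have hAS : A ⊆ S := hA.1.1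
  have hAanti := hA.1.2
  -- choice function: for r ∈ A, pick q ∈ Q incompatible with r
  have hchoice : ∀ r ∈ A, ∃ q ∈ Q, ¬ ∃ t : P, t ≤ r ∧ t ≤ q := fun r hr => hAS hr
  choose f hfQ hfinc using hchoice
  refine ⟨{q | ∃ r, ∃ hr : r ∈ A, f r hr = q}, ?_, ?_, ?_⟩
  · rintro q ⟨r, hr, rfl⟩
    exact hfQ r hr
  · -- cardinality: image of A
    have : #{q | ∃ r, ∃ hr : r ∈ A, f r hr = q} ≤ #A := by
      have : Function.Surjective (fun x : A => (⟨f x.1 x.2, ⟨x.1, x.2, rfl⟩⟩ :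
          {q | ∃ r, ∃ hr : r ∈ A, f r hr = q})) := by
        rintro ⟨q, r, hr, rfl⟩
        exact ⟨⟨r, hr⟩, rfl⟩
      exact Cardinal.mk_le_of_surjective this
    exact lt_of_le_of_lt this (cc A hAanti)
  · apply Set.Subset.antisymm
    · intro p hp q hq
      by_contra hpq
      obtain ⟨r, hrp, hrq⟩ := sep q p hpq
      -- r ∈ S
      have hrS : r ∈ S := ⟨q, hq, hrq⟩
      -- r is compatible with some a ∈ A (else A ∪ {r} bigger antichain)
      have : ∃ a ∈ A, ∃ t : P, t ≤ r ∧ t ≤ a := by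
        by_contra hno
        push_neg at hno
        have hrA : r ∈ A := by
          have hins : insert r A ∈ 𝒜 := by
            constructor
            · exact Set.insert_subset hrS hAS
            · rintro x (rfl | hx) y (rfl | hy) hxy h
              · exact absurd rfl hxy
              · obtain ⟨t, htx, hty⟩ := h; exact hno y hy t htx hty
              · obtain ⟨t, htx, hty⟩ := h; exact hno x hx t hty htx
              · exact hAanti x hx y hy hxy h
          exact hA.2 hins (Set.subset_insert r A) (Set.mem_insert r A)
        exact hno r hrA r (le_refl r) (le_refl r)
      obtain ⟨a, haA, t, htr, hta⟩ := this
      -- t ≤ a and t ≤ f a haA : contradiction with incompatibility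
      have hpfa : p ≤ f a haA := hp _ ⟨a, haA, rfl⟩
      exact hfinc a haA ⟨t, hta, le_trans htr (le_trans hrp hpfa)⟩
    · intro p hp q hq
      obtain ⟨r, hr, rfl⟩ := hq
      exact hp _ (hfQ r hr)
end

section
/- Every infinite separative poset contains an infinite antichain; consequently its Souslin number S(P) is at least ℵ₁. -/
open Cardinal

section Aux

variable {P : Type*} [PartialOrder P] [Infinite P]

/-- Auxiliary: every infinite separative poset contains an infinite antichain. -/
lemma aux_exists_infinite_antichain
    (sep : ∀ p q : P, ¬ q ≤ p → ∃ r, r ≤ q ∧ ¬ ∃ t : P, t ≤ r ∧ t ≤ p) :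
    ∃ A : Set P, (∀ p ∈ A, ∀ q ∈ A, p ≠ q → ¬ ∃ t : P, t ≤ p ∧ t ≤ q) ∧ A.Infinite := by
  classical
  by_cases h1 : ∃ p : P, ∀ q, q ≤ p → ∃ a b, a ≤ q ∧ b ≤ q ∧ ¬ ∃ t : P, t ≤ a ∧ t ≤ b
  · -- splitting case : build a binary splitting sequence
    obtain ⟨p, hp⟩ := h1
    choose A B hA hB hAB using fun q : {x : P // x ≤ p} => hp q q.2
    let s : ℕ → {x : P // x ≤ p} := fun n =>
      Nat.rec ⟨p, le_rfl⟩ (fun _ q => ⟨B q, (hB q).trans q.2⟩) n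
    have hs : ∀ n, (s (n + 1) : P) = B (s n) := fun n => rfl
    have hstep : ∀ n, (s (n + 1)).1 ≤ (s n).1 := fun n => hB (s n)
    have hmono : ∀ n m, n ≤ m → (s m).1 ≤ (s n).1 := by
      intro n m h
      induction h with
      | refl => exact le_rfl
      | step _ ih => exact le_trans (hstep _) ih
    set a : ℕ → P := fun n => A (s n) with ha
    have key : ∀ n m, n < m → ¬ ∃ t : P, t ≤ a n ∧ t ≤ a m := by
      rintro n m hnm ⟨t, htn, htm⟩
      exact hAB (s n) ⟨t, htn, le_trans (le_trans htm (hA (s m))) (hmono (n + 1) m hnm)⟩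
    have key' : ∀ n m, n ≠ m → ¬ ∃ t : P, t ≤ a n ∧ t ≤ a m := by
      intro n m hnm
      rcases lt_or_gt_of_ne hnm with h | h
      · exact key n m h
      · rintro ⟨t, h1, h2⟩; exact key m n h ⟨t, h2, h1⟩
    have hinj : Function.Injective a := by
      intro n m hnm
      by_contra h
      exact key' n m h ⟨a n, le_rfl, le_of_eq hnm⟩
    refine ⟨Set.range a, ?_, Set.infinite_range_of_injective hinj⟩
    rintro _ ⟨n, rfl⟩ _ ⟨m, rfl⟩ hne
    exact key' n m (fun h => hne (by rw [h]))
  · -- atomic case : strong atoms are dense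
    push_neg at h1
    -- every element has a "strong atom" below it
    have atom : ∀ p : P, ∃ m, m ≤ p ∧ ∀ x, x ≤ m → x = m := by
      intro p
      obtain ⟨q, hq, hq2⟩ := h1 p
      refine ⟨q, hq, ?_⟩
      -- any two elements below q are compatible, so by separativity the cone is {q}
      have compat : ∀ a b, a ≤ q → b ≤ q → ∃ t : P, t ≤ a ∧ t ≤ b := by
        intro a b hax hbx
        by_contra hc
        exact hc (hq2 a b hax hbx)
      intro x hx
      have h1 : x ≤ q := hx
      -- show q ≤ x : otherwise separativity gives r ≤ q incompatible with x, but both below q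
      by_contra hne
      have hqx : ¬ q ≤ x := fun h => hne (le_antisymm hx h)
      obtain ⟨r, hr, hr2⟩ := sep x q hqx
      exact hr2 (compat r x hr hx)
    set M : Set P := {m | ∀ x, x ≤ m → x = m} with hM
    have Mincomp : ∀ p ∈ M, ∀ q ∈ M, p ≠ q → ¬ ∃ t : P, t ≤ p ∧ t ≤ q := by
      rintro p hp q hq hne ⟨t, h1, h2⟩
      exact hne ((hp t h1).symm.trans (hq t h2))
    by_cases hMinf : M.Infinite
    · exact ⟨M, Mincomp, hMinf⟩
    · -- finitely many atoms : p ↦ { atoms below p } is injective into a finite type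
      exfalso
      rw [Set.not_infinite] at hMinf
      haveI : Finite ↥M := hMinf.to_subtype
      haveI : Finite (Set ↥M) := inferInstance
      set f : P → Set ↥M := fun p => {m | (m : P) ≤ p} with hf
      have hfinj : Function.Injective f := by
        intro p q hpq
        have main : ∀ x y : P, f x = f y → y ≤ x := by
          intro x y hxy
          by_contra hyx
          obtain ⟨r, hr, hr2⟩ := sep x y hyx
          obtain ⟨m, hm1, hm2⟩ := atom r
          have hmM : m ∈ M := hm2
          have : (⟨m, hmM⟩ : ↥M) ∈ f y := le_trans hm1 hr
          rw [← hxy] at this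
          exact hr2 ⟨m, hm1, this⟩
        exact le_antisymm (main q p hpq.symm) (main p q hpq)
      exact (Finite.of_injective f hfinj).not_infinite ‹Infinite P›

end Aux

/-- Every infinite separative poset contains an infinite antichain, and so
its Souslin number (the least cardinal κ such that there is no antichain of size κ)
is at least ℵ₁. -/
theorem stmt_2 {P : Type*} [PartialOrder P] [Infinite P]
    (sep : ∀ p q : P, ¬ q ≤ p → ∃ r, r ≤ q ∧ ¬ ∃ t : P, t ≤ r ∧ t ≤ p) :
    (∃ A : Set P, (∀ p ∈ A, ∀ q ∈ A, p ≠ q → ¬ ∃ t : P, t ≤ p ∧ t ≤ q) ∧ A.Infinite) ∧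
    aleph 1 ≤ sInf {κ : Cardinal |
      ¬ ∃ A : Set P, (∀ p ∈ A, ∀ q ∈ A, p ≠ q → ¬ ∃ t : P, t ≤ p ∧ t ≤ q) ∧ #A = κ} := by
  obtain ⟨A, hA, hAinf⟩ := aux_exists_infinite_antichain sep
  refine ⟨⟨A, hA, hAinf⟩, ?_⟩
  apply le_csInf
  · -- nonempty : succ #P is in the set
    refine ⟨Order.succ (#P), ?_⟩
    rintro ⟨B, -, hB⟩
    exact absurd (hB ▸ mk_set_le B) (Order.lt_succ (#P)).not_ge
  · intro κ hκ
    by_contra h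
    push_neg at h
    rw [← succ_aleph0, Order.lt_succ_iff] at h
    have hA0 : ℵ₀ ≤ #A := @Cardinal.aleph0_le_mk _ hAinf.to_subtype
    obtain ⟨B, hBA, hBcard⟩ := le_mk_iff_exists_subset.mp (h.trans hA0)
    exact hκ ⟨B, fun p hp q hq hne => hA p (hBA hp) q (hBA hq) hne, hBcard⟩
end

section
/- Let P be a separative poset of cardinality at most ℵ₁. Then there is a dense subset D of P such that for every p ∈ P, the set {q ∈ D : p ≤ q} has cardinality at most ℵ₀. Consequently πNt(P) ≤ ℵ₁ ≤ S(P) when P is infinite. -/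
open Cardinal Set


lemma exists_infinite_antichain {P : Type*} [PartialOrder P] [Infinite P]
    (sep : ∀ p q : P, ¬ q ≤ p → ∃ r, r ≤ q ∧ ¬ ∃ t : P, t ≤ r ∧ t ≤ p) :
    ∃ f : ℕ → P, Function.Injective f ∧
      ∀ i j, i ≠ j → ¬ ∃ t : P, t ≤ f i ∧ t ≤ f j := by
  classical
  set At : Set P := {a | ∀ q ≤ a, q = a} with hAt
  by_cases h : ∀ p : P, ∃ a ∈ At, a ≤ p
  · by_cases hInf : At.Infinite
    · obtain e := hInf.natEmbedding
      refine ⟨fun n => (e n : P), fun a b hab => e.injective (Subtype.ext hab), ?_⟩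
      rintro i j hij ⟨t, hti, htj⟩
      have h1 : t = (e i : P) := (e i).2 t hti
      have h2 : t = (e j : P) := (e j).2 t htj
      exact hij (e.injective (Subtype.ext (h1 ▸ h2)))
    · exfalso
      have hfin : At.Finite := Set.not_infinite.mp hInf
      haveI : Finite At := hfin.to_subtype
      have key : ∀ p q : P, (∀ a : At, (a : P) ≤ p → (a : P) ≤ q) → p ≤ q := by
        intro p q hpq
        by_contra hne
        obtain ⟨r, hrp, hinc⟩ := sep q p hne
        obtain ⟨a, haAt, har⟩ := h r
        exact hinc ⟨a, har, hpq ⟨a, haAt⟩ (har.trans hrp)⟩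
      have hinj : Function.Injective (fun p : P => {a : At | (a : P) ≤ p}) := by
        intro p q hpq
        refine le_antisymm (key p q ?_) (key q p ?_)
        · intro a hap
          exact (Set.ext_iff.mp hpq a).mp hap
        · intro a haq
          exact (Set.ext_iff.mp hpq a).mpr haq
      haveI := Finite.of_injective _ hinj
      exact not_finite P
  · push_neg at h
    obtain ⟨p, hp⟩ := h
    have step : ∀ c : P, c ≤ p → ∃ c' r : P, c' ≤ c ∧ r ≤ c ∧
        ¬ ∃ t : P, t ≤ r ∧ t ≤ c' := by
      intro c hc
      have hcAt : c ∉ At := fun hcat => hp c hcat hc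
      simp only [hAt, Set.mem_setOf_eq, not_forall] at hcAt
      obtain ⟨q, hqc, hqne⟩ := hcAt
      have hnc : ¬ c ≤ q := fun hcq => hqne (le_antisymm hqc hcq)
      obtain ⟨r, hrc, hinc⟩ := sep q c hnc
      exact ⟨q, r, hqc, hrc, hinc⟩
    choose C R hC hR hI using step
    let g : ℕ → {c : P // c ≤ p} := fun n =>
      Nat.rec ⟨p, le_rfl⟩ (fun _ prev => ⟨C prev.1 prev.2, (hC prev.1 prev.2).trans prev.2⟩) n
    have hgsucc : ∀ n, (g (n + 1)).1 = C (g n).1 (g n).2 := fun n => rfl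
    have hgmono : ∀ m n, m ≤ n → (g n).1 ≤ (g m).1 := by
      intro m n hmn
      induction n with
      | zero => cases Nat.le_zero.mp hmn; exact le_rfl
      | succ k ih =>
        rcases Nat.lt_or_ge m (k + 1) with h' | h'
        · exact ((hgsucc k ▸ hC (g k).1 (g k).2).trans (ih (Nat.lt_succ_iff.mp h')))
        · cases le_antisymm hmn h'; exact le_rfl
    set f : ℕ → P := fun n => R (g n).1 (g n).2 with hf
    have pair : ∀ i j, i < j → ¬ ∃ t : P, t ≤ f i ∧ t ≤ f j := by
      rintro i j hij ⟨t, hti, htj⟩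
      refine hI (g i).1 (g i).2 ⟨t, hti, ?_⟩
      have h1 : t ≤ (g j).1 := htj.trans (hR (g j).1 (g j).2)
      have h2 : (g j).1 ≤ (g (i + 1)).1 := hgmono (i + 1) j hij
      exact (h1.trans h2).trans (le_of_eq (hgsucc i))
    have pair' : ∀ i j, i ≠ j → ¬ ∃ t : P, t ≤ f i ∧ t ≤ f j := by
      intro i j hij ht
      rcases hij.lt_or_gt with h' | h'
      · exact pair i j h' ht
      · exact pair j i h' (ht.imp fun t h => ⟨h.2, h.1⟩)
    refine ⟨f, ?_, pair'⟩
    intro i j hij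
    by_contra hne
    exact pair' i j hne ⟨f i, le_rfl, hij.le⟩

lemma stmt3_dense {P : Type*} [PartialOrder P] (hcard : #P ≤ aleph 1) :
    ∃ D : Set P, (∀ p : P, ∃ q ∈ D, q ≤ p) ∧
      ∀ p : P, #{q : P | q ∈ D ∧ p ≤ q} ≤ ℵ₀ := by
  set W := (aleph 1).ord.ToType with hW
  have hcard' : #P ≤ #W := by rwa [Cardinal.mk_toType, Cardinal.card_ord]
  obtain ⟨f⟩ := (Cardinal.le_def P W).mp hcard'
  refine ⟨{d | ∀ q, q ≤ d → q ≠ d → f d ≤ f q}, ?_, ?_⟩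
  · intro p
    obtain ⟨w, ⟨q, hqp, rfl⟩, hmin⟩ :=
      (IsWellFounded.wf (r := ((· < ·) : W → W → Prop))).has_min
        (f '' {q | q ≤ p}) ⟨f p, p, le_rfl, rfl⟩
    refine ⟨q, ?_, hqp⟩
    intro q' hq' _
    exact le_of_not_gt (hmin (f q') ⟨q', hq'.trans hqp, rfl⟩)
  · intro p
    have hinj : Function.Injective
        (fun d : {q : P | q ∈ {d | ∀ q, q ≤ d → q ≠ d → f d ≤ f q} ∧ p ≤ q} =>
          (⟨f d.1, by
            rcases eq_or_ne (d : P) p with h | h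
            · exact le_of_eq (congrArg f h)
            · exact d.2.1 p d.2.2 (Ne.symm h)⟩ : Set.Iic (f p))) := by
      intro a b hab
      exact Subtype.ext (f.injective (congrArg Subtype.val hab))
    refine (Cardinal.mk_le_of_injective hinj).trans ?_
    have hsub : Set.Iic (f p) ⊆ insert (f p) (Set.Iio (f p)) := by
      intro y hy
      rcases lt_or_eq_of_le (Set.mem_Iic.mp hy) with h | h
      · exact Set.mem_insert_of_mem _ h
      · exact h ▸ Set.mem_insert _ _
    refine (Cardinal.mk_le_mk_of_subset hsub).trans ?_
    have : #(Set.Iio (f p)) < aleph 1 := Cardinal.mk_Iio_ord_toType (f p)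
    have hcnt : (Set.Iio (f p)).Countable := by
      rwa [countable_iff_lt_aleph_one]
    have : (insert (f p) (Set.Iio (f p))).Countable := hcnt.insert _
    exact (Cardinal.mk_le_aleph0_iff.mpr this)

/-- A separative poset of cardinality ≤ ℵ₁ has a dense subset `D` such that
every `p` lies below at most countably many members of `D`; consequently
πNt(P) ≤ ℵ₁ ≤ S(P) when `P` is infinite. -/
theorem stmt_3 {P : Type*} [PartialOrder P]
    (hcard : #P ≤ aleph 1)
    (sep : ∀ p q : P, ¬ q ≤ p → ∃ r, r ≤ q ∧ ¬ ∃ t : P, t ≤ r ∧ t ≤ p) :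
    (∃ D : Set P, (∀ p : P, ∃ q ∈ D, q ≤ p) ∧
      ∀ p : P, #{q : P | q ∈ D ∧ p ≤ q} ≤ ℵ₀) ∧
    (Infinite P →
      aleph 1 ≤ sInf {κ : Cardinal |
        ¬ ∃ A : Set P, (∀ p ∈ A, ∀ q ∈ A, p ≠ q → ¬ ∃ t : P, t ≤ p ∧ t ≤ q) ∧ #A = κ}) := by
  refine ⟨stmt3_dense hcard, ?_⟩
  intro hInf
  obtain ⟨f, hfinj, hfpair⟩ := exists_infinite_antichain sep
  refine le_csInf ?_ ?_
  · refine ⟨Order.succ #P, ?_⟩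
    rintro ⟨A, -, hA⟩
    have h1 : #A ≤ #P := mk_set_le A
    rw [hA] at h1
    exact absurd h1 (not_le.mpr (Order.lt_succ #P))
  · rintro b hb
    by_contra hlt
    apply hb
    have hb0 : b < aleph 1 := not_le.mp hlt
    have hale : (aleph 1 : Cardinal) = Order.succ ℵ₀ := by
      rw [← aleph_zero, ← aleph_succ, Ordinal.succ_zero]
    have hble : b ≤ ℵ₀ := by
      rw [hale, Order.lt_succ_iff] at hb0
      exact hb0
    have hrange : #(Set.range f) = ℵ₀ := by
      have := Cardinal.mk_range_eq_of_injective hfinj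
      rw [Cardinal.mk_nat] at this
      rw [← Cardinal.lift_uzero #(Set.range f), this, Cardinal.lift_aleph0]
    obtain ⟨s, hs⟩ := Cardinal.le_mk_iff_exists_set.mp (hrange ▸ hble)
    refine ⟨Subtype.val '' s, ?_, ?_⟩
    · rintro p ⟨⟨p, ⟨i, rfl⟩⟩, hps, rfl⟩ q ⟨⟨q, ⟨j, rfl⟩⟩, hqs, rfl⟩ hpq
      have hij : i ≠ j := fun h => hpq (by rw [h])
      exact hfpair i j hij
    · rw [Cardinal.mk_image_eq Subtype.val_injective, hs]
end

section
/- Let κ be an ordinal and λ an ordinal, and order κ × λ by (α, β) ≤ (α', β') if and only if α = α' and β ≥ β'. If κ and λ are infinite cardinals with λ a limit ordinal, then with respect to this order the Souslin number of κ × λ is κ⁺ and every dense subset D of κ × λ contains, for each α < κ, a subset of {α} × λ cofinal in λ (under the reversed order), so the π-Noetherian type of κ × λ equals cf(λ). -/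
open Cardinal

/-- With the order (α,β) ≤ (α',β') iff α = α' ∧ β ≥ β' on κ × λ
(κ, λ infinite cardinals, λ a limit ordinal), the Souslin number is κ⁺, every dense
set meets each fiber cofinally (in the reversed order), and πNt(κ × λ) = cf(λ). -/
theorem stmt_5 (κ lam : Cardinal.{0}) (hκ : ℵ₀ ≤ κ) (hlam : ℵ₀ ≤ lam)
    (hlim : Order.IsSuccLimit lam.ord) :
    let A := κ.ord.ToType
    let B := lam.ord.ToType
    let le : A × B → A × B → Prop := fun x y => x.1 = y.1 ∧ y.2 ≤ x.2
    let compat : A × B → A × B → Prop := fun x y => ∃ z, le z x ∧ le z y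
    let dense : Set (A × B) → Prop := fun D => ∀ x, ∃ q ∈ D, le q x
    (sInf {c : Cardinal |
        ¬ ∃ S : Set (A × B), (∀ x ∈ S, ∀ y ∈ S, x ≠ y → ¬ compat x y) ∧ #S = c}
      = Order.succ κ) ∧
    (∀ D : Set (A × B), dense D → ∀ α : A, ∀ β : B, ∃ β' : B, β ≤ β' ∧ (α, β') ∈ D) ∧
    (sInf {c : Cardinal | ∃ D : Set (A × B), dense D ∧
        ∀ x : A × B, #{q : A × B | q ∈ D ∧ le x q} < c}
      = lam.ord.cof) := by
  intro A B le compat dense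
  haveI hwB : IsWellOrder (lam.ord.ToType) (· < ·) := isWellOrder_lt
  have hA : #A = κ := by rw [Cardinal.mk_toType, Cardinal.card_ord]
  have hB : #B = lam := by rw [Cardinal.mk_toType, Cardinal.card_ord]
  have hAne : Nonempty A := Ordinal.toType_nonempty_iff_ne_zero.2 (by
    intro h
    have : (0 : Cardinal) = κ := by rw [← Cardinal.card_ord κ, h]; simp
    exact (Cardinal.aleph0_pos.trans_le hκ).ne' this.symm)
  have hBne : Nonempty B := Ordinal.toType_nonempty_iff_ne_zero.2 hlim.ne_bot
  obtain ⟨b0⟩ := hBne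
  -- compatibility is equality of first coordinates
  have hcompat : ∀ x y : A × B, compat x y ↔ x.1 = y.1 := by
    intro x y
    constructor
    · rintro ⟨z, ⟨h1, _⟩, ⟨h2, _⟩⟩
      rw [← h1, ← h2]
    · intro h
      exact ⟨(x.1, max x.2 y.2), ⟨rfl, le_max_left _ _⟩, ⟨h, le_max_right _ _⟩⟩
  -- Part 2
  have part2 : ∀ D : Set (A × B), dense D →
      ∀ α : A, ∀ β : B, ∃ β' : B, β ≤ β' ∧ (α, β') ∈ D := by
    intro D hD α β
    obtain ⟨q, hqD, hq1, hq2⟩ := hD (α, β)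
    refine ⟨q.2, hq2, ?_⟩
    have hq : q = (α, q.2) := Prod.ext hq1 rfl
    rwa [← hq]
  -- Part 1
  have part1 : sInf {c : Cardinal |
      ¬ ∃ S : Set (A × B), (∀ x ∈ S, ∀ y ∈ S, x ≠ y → ¬ compat x y) ∧ #S = c}
      = Order.succ κ := by
    have hU : Order.succ κ ∈ {c : Cardinal |
        ¬ ∃ S : Set (A × B), (∀ x ∈ S, ∀ y ∈ S, x ≠ y → ¬ compat x y) ∧ #S = c} := by
      rintro ⟨S, hanti, hcard⟩
      have hinj : Function.Injective (fun s : S => (s : A × B).1) := by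
        intro s t hst
        by_contra hne
        exact hanti s s.2 t t.2 (fun h => hne (Subtype.ext h)) ((hcompat _ _).2 hst)
      have h1 : #S ≤ κ := hA ▸ Cardinal.mk_le_of_injective hinj
      rw [hcard] at h1
      exact absurd h1 (not_le.2 (Order.lt_succ κ))
    refine le_antisymm (csInf_le (OrderBot.bddBelow _) hU) (le_csInf ⟨_, hU⟩ ?_)
    intro c hc
    rw [Order.succ_le_iff]
    by_contra hle
    push_neg at hle
    apply hc
    have hcle : #c.out ≤ #A := by rw [Cardinal.mk_out, hA]; exact hle
    obtain ⟨f⟩ := Cardinal.le_def _ _ |>.1 hcle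
    refine ⟨Set.range (fun i : c.out => ((f i, b0) : A × B)), ?_, ?_⟩
    · rintro x ⟨i, rfl⟩ y ⟨j, rfl⟩ hne hcom
      have : f i = f j := (hcompat _ _).1 hcom
      exact hne (by rw [f.injective this])
    · rw [Cardinal.mk_range_eq _ (fun i j h => f.injective (congrArg Prod.fst h)),
        Cardinal.mk_out]
  -- Part 3
  have part3 : sInf {c : Cardinal | ∃ D : Set (A × B), dense D ∧
      ∀ x : A × B, #{q : A × B | q ∈ D ∧ le x q} < c} = lam.ord.cof := by
    set e := Ordinal.ToType.mk (o := lam.ord) with he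
    set e2 := Ordinal.ToType.mk (o := lam.ord.cof.ord) with he2
    obtain ⟨f, hf⟩ := Ordinal.exists_fundamental_sequence lam.ord
    have hflt : ∀ i hi, f i hi < lam.ord := fun i hi => by
      conv_rhs => rw [← hf.blsub_eq]
      exact Ordinal.lt_blsub f i hi
    -- the good dense set
    have hmem : lam.ord.cof ∈ {c : Cardinal | ∃ D : Set (A × B), dense D ∧
        ∀ x : A × B, #{q : A × B | q ∈ D ∧ le x q} < c} := by
      refine ⟨{p : A × B | ∃ i hi, p.2 = e ⟨f i hi, hflt i hi⟩}, ?_, ?_⟩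
      · -- density
        intro x
        have hb : (e.symm x.2 : Ordinal) < Ordinal.blsub _ f := by
          rw [hf.blsub_eq]; exact (e.symm x.2).2
        obtain ⟨i, hi, hle⟩ := Ordinal.lt_blsub_iff.1 hb
        refine ⟨(x.1, e ⟨f i hi, hflt i hi⟩), ⟨i, hi, rfl⟩, rfl, ?_⟩
        have : x.2 = e (e.symm x.2) := (e.apply_symm_apply x.2).symm
        rw [this]
        exact e.le_iff_le.2 hle
      · -- Noetherian-type bound
        intro x
        have hb1 : (e.symm x.2 : Ordinal) + 1 < lam.ord := by
          rw [Ordinal.add_one_eq_succ]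
          exact hlim.succ_lt (e.symm x.2).2
        have hb1' : (e.symm x.2 : Ordinal) + 1 < Ordinal.blsub _ f := by
          rwa [hf.blsub_eq]
        obtain ⟨j, hj, hjle⟩ := Ordinal.lt_blsub_iff.1 hb1'
        have hbj : (e.symm x.2 : Ordinal) < f j hj := by
          rw [Ordinal.add_one_eq_succ] at hjle
          exact (Order.succ_le_iff).1 hjle
        set e3 := Ordinal.ToType.mk (o := j) with he3
        -- inject into j.ToType
        have key : #{q : A × B | q ∈ {p : A × B | ∃ i hi, p.2 = e ⟨f i hi, hflt i hi⟩}
            ∧ le x q} ≤ #(j.ToType) := by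
          have : ∀ q : {q : A × B | q ∈ {p : A × B | ∃ i hi,
              p.2 = e ⟨f i hi, hflt i hi⟩} ∧ le x q}, ∃ i : Set.Iio lam.ord.cof.ord,
              (q : A × B).2 = e ⟨f i.1 i.2, hflt i.1 i.2⟩ ∧ i.1 < j := by
            rintro ⟨q, ⟨i, hi, hq⟩, hx1, hx2⟩
            refine ⟨⟨i, hi⟩, hq, ?_⟩
            have hfib : f i hi ≤ (e.symm x.2 : Ordinal) := by
              have : q.2 ≤ e (e.symm x.2) := by rwa [e.apply_symm_apply]
              rw [hq] at this
              exact Subtype.mk_le_mk.1 (e.le_iff_le.1 this)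
            by_contra hji
            push_neg at hji
            exact absurd (hf.monotone hj hi hji) (not_le.2 (hfib.trans_lt hbj))
          choose g hg1 hg2 using this
          refine Cardinal.mk_le_of_injective (f := fun q => e3 ⟨(g q).1, hg2 q⟩) ?_
          intro q1 q2 hq
          have hv := congrArg Subtype.val (e3.injective hq)
          have hgeq : (g q1) = (g q2) := Subtype.ext hv
          have h2 : (q1 : A × B).2 = (q2 : A × B).2 := by
            rw [hg1 q1, hg1 q2]
            congr 1
            rw [hgeq]
          have h1 : (q1 : A × B).1 = (q2 : A × B).1 := by
            rw [← q1.2.2.1, ← q2.2.2.1]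
          exact Subtype.ext (Prod.ext h1 h2)
        refine key.trans_lt ?_
        rw [Cardinal.mk_toType]
        exact Cardinal.lt_ord.1 hj
    -- lower bound
    have hlow : ∀ c ∈ {c : Cardinal | ∃ D : Set (A × B), dense D ∧
        ∀ x : A × B, #{q : A × B | q ∈ D ∧ le x q} < c}, lam.ord.cof ≤ c := by
      rintro c ⟨D, hD, hsmall⟩
      by_contra hcof
      push_neg at hcof
      obtain ⟨α⟩ := hAne
      have hE : Set.Unbounded (· < ·) {β : B | (α, β) ∈ D} := by
        intro a
        obtain ⟨β', hβ', hmem'⟩ := part2 D hD α a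
        exact ⟨β', hmem', not_lt.2 hβ'⟩
      have hcofE : lam.ord.cof ≤ #{β : B | (α, β) ∈ D} := by
        have := Ordinal.cof_type_le (s := {β : B | (α, β) ∈ D})
          (fun a => (hE a).imp fun b hb => ⟨hb.1, not_lt.1 hb.2⟩)
        rwa [Ordinal.cof_toType] at this
      have hcE : c ≤ #{β : B | (α, β) ∈ D} := (hcof.le.trans hcofE)
      obtain ⟨E', hE'sub, hE'card⟩ := Cardinal.le_mk_iff_exists_subset.1 hcE
      have hbdd : Set.Bounded (· < ·) E' := by
        apply not_isCofinal_iff.1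
        intro hc
        have := Ordinal.cof_type_le hc
        rw [Ordinal.cof_toType, hE'card] at this
        exact absurd this (not_le.2 hcof)
      obtain ⟨a, ha⟩ := hbdd
      have hinj : c ≤ #{q : A × B | q ∈ D ∧ le (α, a) q} := by
        rw [← hE'card]
        refine Cardinal.mk_le_of_injective (f := fun β : E' =>
          (⟨(α, β.1), hE'sub β.2, rfl, (ha β.1 β.2).le⟩ :
            {q : A × B | q ∈ D ∧ le (α, a) q})) ?_
        intro b1 b2 h
        exact Subtype.ext (congrArg Prod.snd (congrArg Subtype.val h))
      exact (hinj.trans_lt (hsmall (α, a))).false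
    exact le_antisymm (csInf_le (OrderBot.bddBelow _) hmem) (le_csInf ⟨_, hmem⟩ hlow)
  exact ⟨part1, part2, part3⟩
end

section
/- In every nonempty topological space X, there exists a nonempty open set V ⊆ X such that S(W) = S(V) for every nonempty open W ⊆ V. -/
open Cardinal

def IsCellular (Y : Type*) [TopologicalSpace Y] (C : Set (Set Y)) : Prop :=
  (∀ W ∈ C, IsOpen W ∧ W.Nonempty) ∧ C.PairwiseDisjoint id

noncomputable def souslin (Y : Type u) [TopologicalSpace Y] : Cardinal.{u} :=
  sInf {c : Cardinal | ¬ ∃ C : Set (Set Y), IsCellular Y C ∧ #C = c}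

lemma souslin_nonempty_compl (Y : Type u) [TopologicalSpace Y] :
    {c : Cardinal | ¬ ∃ C : Set (Set Y), IsCellular Y C ∧ #C = c}.Nonempty := by
  refine ⟨Order.succ #(Set Y), ?_⟩
  rintro ⟨C, -, hC⟩
  have := Cardinal.mk_set_le C
  rw [hC] at this
  simp at this

lemma souslin_mono {X : Type u} [TopologicalSpace X] {W V : Set X}
    (hW : IsOpen W) (hVW : W ⊆ V) : souslin W ≤ souslin V := by
  apply csInf_le_csInf (OrderBot.bddBelow _) (souslin_nonempty_compl V)
  intro c hc
  simp only [Set.mem_setOf_eq] at hc ⊢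
  intro ⟨C, ⟨hop, hdisj⟩, hcard⟩
  apply hc
  set f : ↥W → ↥V := Set.inclusion hVW with hf
  have hfi : Function.Injective f := Set.inclusion_injective hVW
  refine ⟨(Set.image f) '' C, ⟨?_, ?_⟩, ?_⟩
  · rintro _ ⟨U, hU, rfl⟩
    obtain ⟨hUo, hUne⟩ := hop U hU
    constructor
    · -- f '' U is open in V
      have h1 : IsOpen (Subtype.val '' U : Set X) := hW.isOpenMap_subtype_val U hUo
      have h2 : f '' U = (Subtype.val : ↥V → X) ⁻¹' (Subtype.val '' U) := by
        ext ⟨x, hx⟩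
        simp only [Set.mem_image, Set.mem_preimage]
        constructor
        · rintro ⟨u, hu, he⟩
          exact ⟨u, hu, congrArg Subtype.val he⟩
        · rintro ⟨u, hu, h⟩
          exact ⟨u, hu, Subtype.ext h⟩
      rw [h2]
      exact h1.preimage continuous_subtype_val
    · exact hUne.image f
  · intro a ha b hb hab
    obtain ⟨Ua, hUa, rfl⟩ := ha
    obtain ⟨Ub, hUb, rfl⟩ := hb
    have : Ua ≠ Ub := fun h => hab (by rw [h])
    have := hdisj hUa hUb this
    change Disjoint Ua Ub at this
    change Disjoint (Set.image f Ua) (Set.image f Ub)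
    exact (Set.disjoint_image_iff hfi).2 this
  · rw [← hcard]
    exact Cardinal.mk_image_eq_of_injOn _ _
      ((Set.image_injective.2 hfi).injOn)

/-- Every nonempty space has a nonempty open subset V such that all
nonempty open subsets of V have the same Souslin number as V. -/
theorem stmt_8 {X : Type u} [TopologicalSpace X] [Nonempty X] :
    ∃ V : Set X, IsOpen V ∧ V.Nonempty ∧
      ∀ W : Set X, IsOpen W → W.Nonempty → W ⊆ V → souslin W = souslin V := by
  set S : Set Cardinal.{u} := {c | ∃ V : Set X, IsOpen V ∧ V.Nonempty ∧ souslin V = c} with hS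
  have hSne : S.Nonempty := ⟨souslin (Set.univ : Set X), Set.univ, isOpen_univ,
    Set.univ_nonempty, rfl⟩
  obtain ⟨V, hVo, hVne, hVS⟩ := Cardinal.lt_wf.min_mem S hSne
  refine ⟨V, hVo, hVne, fun W hWo hWne hWV => ?_⟩
  refine le_antisymm (souslin_mono hWo hWV) ?_
  rw [hVS]
  by_contra h
  exact Cardinal.lt_wf.not_lt_min S ⟨W, hWo, hWne, rfl⟩ (lt_of_not_ge h)
end

section
/- Let D be a dense subset of the Hechler forcing ℍ. Then there exists s ∈ ω^{<ω} such that D_s = {f ∈ ω^ω : (s, f) ∈ D} is a dominating family in (ω^ω, ≤*). -/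
/-- Eventual domination on ω^ω. -/
def LeStar (f g : ℕ → ℕ) : Prop := ∀ᶠ n in Filter.cofinite, f n ≤ g n

/-- Hechler forcing conditions: a finite sequence together with a function. -/
abbrev Hechler : Type := List ℕ × (ℕ → ℕ)

/-- The Hechler extension relation: `p` extends `q`. -/
def HLe (p q : Hechler) : Prop :=
  q.1 <+: p.1 ∧ (∀ n, p.1.length ≤ n → q.2 n ≤ p.2 n) ∧
    (∀ n, q.1.length ≤ n → n < p.1.length → q.2 n ≤ p.1.getD n 0)

/-- For every dense subset D of the Hechler forcing there is a finite
sequence s such that D_s = {f : (s, f) ∈ D} is a dominating family. -/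
theorem stmt_11 (D : Set Hechler) (hD : ∀ p : Hechler, ∃ q ∈ D, HLe q p) :
    ∃ s : List ℕ, ∀ f : ℕ → ℕ, ∃ g : ℕ → ℕ, (s, g) ∈ D ∧ LeStar f g := by
  by_contra h
  push_neg at h
  -- for each s, pick f s not dominated by any member of D_s
  choose f hf using h
  -- diagonal function
  set F : ℕ → ℕ := fun n =>
    (Finset.range (n + 1)).sup fun k => f (Denumerable.ofNat (List ℕ) k) n with hF
  obtain ⟨⟨t, g⟩, hqD, hpre, hfun, -⟩ := hD ([], F)
  refine hf t g hqD ?_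
  rw [LeStar, Nat.cofinite_eq_atTop, Filter.eventually_atTop]
  refine ⟨max t.length (Encodable.encode t), fun n hn => ?_⟩
  have h1 : t.length ≤ n := le_trans (le_max_left _ _) hn
  have h2 : Encodable.encode t ≤ n := le_trans (le_max_right _ _) hn
  have hFg : F n ≤ g n := hfun n h1
  refine le_trans (le_trans ?_ hFg) le_rfl
  have : f (Denumerable.ofNat (List ℕ) (Encodable.encode t)) n ≤ F n := by
    apply Finset.le_sup (f := fun k => f (Denumerable.ofNat (List ℕ) k) n)
    simpa using Nat.lt_succ_of_le h2
  simpa [Denumerable.ofNat_encode] using this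
end

section
/- If 𝔟 > ℵ₁, then for every dense subset D of the Hechler forcing ℍ and every uncountable cardinal κ < 𝔟, there is a condition p ∈ ℍ extending at least κ many elements of D. Consequently πNt(ℍ) ≥ 𝔟. -/
open Cardinal

noncomputable def bNum : Cardinal.{0} :=
  sInf {c : Cardinal | ∃ A : Set (ℕ → ℕ), #A = c ∧ ¬ ∃ g, ∀ f ∈ A, LeStar f g}

lemma bNum_bound {A : Set (ℕ → ℕ)} (h : #A < bNum) : ∃ g, ∀ f ∈ A, LeStar f g := by
  by_contra hc
  exact absurd (csInf_le (OrderBot.bddBelow _) ⟨A, rfl, hc⟩ : bNum ≤ #A) (not_le.2 h)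

lemma pigeon {α β : Type} [Countable β] (A : Set α) (F : α → β) {c : Cardinal.{0}}
    (hcof : ℵ₀ < c.ord.cof) (hA : c ≤ #A) : ∃ b, c ≤ #{x | x ∈ A ∧ F x = b} := by
  by_contra hc
  push_neg at hc
  have hc0 : ℵ₀ < c := hcof.trans_le (Ordinal.cof_ord_le c)
  have cover : A ⊆ ⋃ b, {x | x ∈ A ∧ F x = b} := fun x hx => Set.mem_iUnion.2 ⟨F x, hx, rfl⟩
  have h1 : c ≤ #(⋃ b, {x | x ∈ A ∧ F x = b}) := hA.trans (mk_le_mk_of_subset cover)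
  have h2 : #(⋃ b, {x | x ∈ A ∧ F x = b}) ≤ #β * ⨆ b, #{x | x ∈ A ∧ F x = b} :=
    mk_iUnion_le _
  have h3 : (⨆ b, #{x | x ∈ A ∧ F x = b}) < c :=
    Ordinal.iSup_lt (mk_le_aleph0.trans_lt hcof) hc
  have h4 : #β * (⨆ b, #{x | x ∈ A ∧ F x = b}) < c := by
    refine lt_of_le_of_lt (Cardinal.mul_le_max _ _) ?_
    exact max_lt (max_lt (mk_le_aleph0.trans_lt hc0) h3) hc0
  exact absurd (h1.trans h2) (not_le.2 h4)

lemma leStar_threshold {f g : ℕ → ℕ} (h : LeStar f g) : ∃ m, ∀ i, m ≤ i → f i ≤ g i := by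
  have hfin : {n | ¬ f n ≤ g n}.Finite := Filter.eventually_cofinite.mp h
  obtain ⟨m, hm⟩ := hfin.bddAbove
  exact ⟨m + 1, fun i hi => by_contra fun hcon => by
    have := hm hcon; omega⟩

lemma getD_map_range (m i : ℕ) (f : ℕ → ℕ) (h : i < m) :
    ((List.range m).map f).getD i 0 = f i := by
  rw [List.getD_eq_getElem ((List.range m).map f) 0 (by simpa using h)]
  simp

lemma exists_ks (κ : Cardinal.{0}) (hκ0 : ℵ₀ < κ) :
    ∃ ks : ℕ → Cardinal.{0}, (∀ n, ℵ₀ < (ks n).ord.cof) ∧ (∀ n, ks n ≤ κ) ∧ κ ≤ ⨆ n, ks n := by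
  by_cases hco : ℵ₀ < κ.ord.cof
  · exact ⟨fun _ => κ, fun _ => hco, fun _ => le_rfl, by rw [ciSup_const]⟩
  · have hlim : Order.IsSuccLimit κ.ord := Cardinal.isSuccLimit_ord hκ0.le
    have hcof : κ.ord.cof = ℵ₀ := le_antisymm (not_lt.1 hco) (Ordinal.aleph0_le_cof.2 hlim)
    obtain ⟨f, hf⟩ := Ordinal.exists_fundamental_sequence κ.ord
    have homega : κ.ord.cof.ord = Ordinal.omega0 := by rw [hcof, ord_aleph0]
    have hnatlt : ∀ n : ℕ, (n : Ordinal) < κ.ord.cof.ord := fun n => by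
      rw [homega]; exact Ordinal.nat_lt_omega0 n
    set e : ℕ → Ordinal := fun n => f n (hnatlt n) with he
    have helt : ∀ n, e n < κ.ord := fun n => hf.lt _
    have hecard : ∀ n, (e n).card < κ := fun n => Cardinal.lt_ord.1 (helt n)
    set ks : ℕ → Cardinal := fun n => Order.succ (max ℵ₀ (e n).card) with hks
    have hreg : ∀ n, Cardinal.IsRegular (ks n) := fun n => isRegular_succ (le_max_left _ _)
    have hksle : ∀ n, ks n ≤ κ := fun n => Order.succ_le_of_lt (max_lt hκ0 (hecard n))
    refine ⟨ks, ?_, hksle, ?_⟩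
    · intro n; rw [(hreg n).cof_eq]; exact (le_max_left ℵ₀ _).trans_lt (Order.lt_succ _)
    · by_contra hsup
      push_neg at hsup
      have hbdd : BddAbove (Set.range ks) := ⟨κ, by rintro x ⟨n, rfl⟩; exact hksle n⟩
      have hord : κ.ord ≤ (⨆ n, ks n).ord := by
        rw [← hf.blsub_eq]
        refine Ordinal.blsub_le_iff.2 ?_
        intro i hi
        obtain ⟨n, rfl⟩ := Ordinal.lt_omega0.1 (homega ▸ hi)
        have hfe : f _ hi = e n := rfl
        rw [hfe]
        refine Cardinal.lt_ord.2 ?_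
        calc (e n).card ≤ max ℵ₀ (e n).card := le_max_right _ _
        _ < ks n := Order.lt_succ _
        _ ≤ ⨆ n, ks n := le_ciSup hbdd n
      have : κ ≤ ⨆ n, ks n := by rwa [Cardinal.ord_le_ord] at hord
      exact absurd this (not_le.2 hsup)
lemma main_capture (D : Set Hechler) (hD : ∀ p : Hechler, ∃ q ∈ D, HLe q p)
    (κ : Cardinal.{0}) (hκ0 : ℵ₀ < κ) (hκb : κ < bNum) :
    ∃ p : Hechler, κ ≤ #{q : Hechler | q ∈ D ∧ HLe p q} := by
  classical
  choose Φ hΦD hΦ using hD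
  set Qf : (ℕ → ℕ) → Hechler := fun f => Φ ([], f) with hQfdef
  have hQmem : ∀ f, Qf f ∈ D := fun f => hΦD _
  set Hc : Hechler → (ℕ → ℕ) := fun q n => max (q.1.getD n 0) (q.2 n) with hHdef
  have hQle : ∀ f n, f n ≤ Hc (Qf f) n := by
    intro f n
    obtain ⟨h1, h2, h3⟩ := hΦ ([], f)
    rcases lt_or_ge n (Qf f).1.length with hn | hn
    · exact le_max_of_le_left (h3 n (by simp) hn)
    · exact le_max_of_le_right (h2 n hn)
  -- Step 2 : D contains more than κ many elements
  have hrange : Order.succ κ ≤ #(Set.range Qf) := by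
    by_contra hcon
    have hle : #(Set.range Qf) ≤ κ := Order.lt_succ_iff.1 (not_le.1 hcon)
    have himg : #(Hc '' Set.range Qf) < bNum := lt_of_le_of_lt (mk_image_le.trans hle) hκb
    obtain ⟨g, hg⟩ := bNum_bound himg
    have hgf : LeStar (Hc (Qf (fun n => g n + 1))) g :=
      hg _ ⟨Qf (fun n => g n + 1), ⟨_, rfl⟩, rfl⟩
    have hev : ∀ᶠ n in Filter.cofinite, g n + 1 ≤ g n :=
      hgf.mono fun n hn => le_trans (hQle (fun n => g n + 1) n) hn
    obtain ⟨n, hn⟩ := hev.exists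
    omega
  obtain ⟨D1, hD1sub, hD1card⟩ := Cardinal.le_mk_iff_exists_subset.1 hrange
  have hRD : Set.range Qf ⊆ D := Set.range_subset_iff.2 hQmem
  -- Step 3 : stem pigeonhole
  have hsuccreg : Cardinal.IsRegular (Order.succ κ) := isRegular_succ hκ0.le
  have hsucccof : ℵ₀ < (Order.succ κ).ord.cof := by
    rw [hsuccreg.cof_eq]; exact hκ0.trans (Order.lt_succ κ)
  obtain ⟨s, hsE⟩ := pigeon D1 (fun q => q.1) hsucccof hD1card.ge
  set E : Set Hechler := {q | q ∈ D1 ∧ q.1 = s} with hEdef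
  have hE : Order.succ κ ≤ #E := hsE
  have hED : E ⊆ D := fun q hq => hRD (hD1sub hq.1)
  have hEs : ∀ q ∈ E, q.1 = s := fun q hq => hq.2
  -- Step 4 : the c-recursion
  set Ej : List ℕ → Set Hechler :=
    fun l => {q | q ∈ E ∧ ∀ i, i < l.length → q.2 (s.length + i) = l.getD i 0} with hEjdef
  have hEj0 : Order.succ κ ≤ #(Ej []) := by
    have hEE : Ej [] = E := Set.ext fun q => ⟨fun h => h.1, fun h => ⟨h, fun i hi => by simp at hi⟩⟩
    rwa [hEE]
  have hstep : ∀ l : List ℕ, Order.succ κ ≤ #(Ej l) → ∃ v, Order.succ κ ≤ #(Ej (l ++ [v])) := by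
    intro l hl
    obtain ⟨v, hv⟩ := pigeon (Ej l) (fun q => q.2 (s.length + l.length)) hsucccof hl
    refine ⟨v, hv.trans (mk_le_mk_of_subset ?_)⟩
    rintro q ⟨⟨hqE, hq2⟩, hq3⟩
    refine ⟨hqE, fun i hi => ?_⟩
    rw [List.length_append, List.length_singleton] at hi
    rcases lt_or_eq_of_le (Nat.lt_succ_iff.1 hi) with h | h
    · rw [List.getD_append _ _ _ _ h]; exact hq2 i h
    · subst h
      rw [List.getD_append_right _ _ _ _ le_rfl, Nat.sub_self]
      exact hq3
  let cfun : ℕ → {l : List ℕ // Order.succ κ ≤ #(Ej l)} := fun n =>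
    Nat.rec ⟨[], hEj0⟩ (fun _ ih => ⟨ih.1 ++ [Classical.choose (hstep ih.1 ih.2)],
      Classical.choose_spec (hstep ih.1 ih.2)⟩) n
  set cl : ℕ → List ℕ := fun n => (cfun n).1 with hcldef
  have hclE : ∀ n, Order.succ κ ≤ #(Ej (cl n)) := fun n => (cfun n).2
  have hclstep : ∀ n, ∃ v, cl (n + 1) = cl n ++ [v] := fun n => ⟨_, rfl⟩
  have hcllen : ∀ n, (cl n).length = n := by
    intro n
    induction n with
    | zero => rfl
    | succ n ih =>
      obtain ⟨v, hv⟩ := hclstep n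
      rw [hv, List.length_append, List.length_singleton, ih]
  have hEjmono1 : ∀ n, Ej (cl (n + 1)) ⊆ Ej (cl n) := by
    intro n q hq
    obtain ⟨v, hv⟩ := hclstep n
    obtain ⟨hqE, hq2⟩ := hq
    refine ⟨hqE, fun i hi => ?_⟩
    have h2 := hq2 i (by rw [hv, List.length_append, List.length_singleton]; omega)
    rwa [hv, List.getD_append _ _ _ _ hi] at h2
  have hEjmono : ∀ {a b : ℕ}, a ≤ b → Ej (cl b) ⊆ Ej (cl a) := by
    intro a b hab
    induction b, hab using Nat.le_induction with
    | base => exact fun _ h => h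
    | succ n hn ih => exact fun q hq => ih (hEjmono1 n hq)
  set cval : ℕ → ℕ := fun i => (cl (i + 1)).getD i 0 with hcvaldef
  have hcvalspec : ∀ n q, q ∈ Ej (cl n) → ∀ i, i < n → q.2 (s.length + i) = cval i := by
    intro n q hq i hi
    have hq' : q ∈ Ej (cl (i + 1)) := hEjmono (a := i + 1) (b := n) (by omega) hq
    exact hq'.2 i (by have := hcllen (i + 1); omega)
  -- Step 5 : the sets X j and the dominating g
  have hXex : ∀ j : ℕ, ∃ Xj : Set Hechler, Xj ⊆ Ej (cl j) ∧ #Xj = κ := by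
    intro j
    obtain ⟨Xj, h1, h2⟩ := Cardinal.le_mk_iff_exists_subset.1 ((Order.le_succ κ).trans (hclE j))
    exact ⟨Xj, h1, h2⟩
  choose Xfun hX1 hX2 using hXex
  have hXcard : #(⋃ j, Xfun j) ≤ κ := by
    refine (mk_iUnion_le _).trans ?_
    rw [mk_nat]
    have h1 : (⨆ j, #(Xfun j)) = κ := by
      have : (fun j => #(Xfun j)) = fun _ => κ := funext hX2
      rw [this, ciSup_const]
    rw [h1, aleph0_mul_eq hκ0.le]
  have himg2 : #((fun q : Hechler => q.2) '' ⋃ j, Xfun j) < bNum :=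
    lt_of_le_of_lt (mk_image_le.trans hXcard) hκb
  obtain ⟨g, hg⟩ := bNum_bound himg2
  have hgX : ∀ q ∈ ⋃ j, Xfun j, LeStar q.2 g := fun q hq => hg q.2 ⟨q, hq, rfl⟩
  have hMex : ∀ q : Hechler, ∃ m : ℕ, q ∈ (⋃ j, Xfun j) → ∀ i, m ≤ i → q.2 i ≤ g i := by
    intro q
    by_cases hq : q ∈ ⋃ j, Xfun j
    · obtain ⟨m, hm⟩ := leStar_threshold (hgX q hq); exact ⟨m, fun _ => hm⟩
    · exact ⟨0, fun h => absurd h hq⟩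
  choose Mf hMf using hMex
  -- Step 6 : the cardinal sequence
  obtain ⟨ks, hks1, hks2, hks3⟩ := exists_ks κ hκ0
  -- Step 7 : batches
  have hbatch : ∀ j n : ℕ, ∃ mt : ℕ × (ℕ → ℕ), s.length + j ≤ mt.1 ∧
      ks n ≤ #{q | q ∈ Xfun j ∧ Mf q ≤ mt.1 ∧
        ∀ i, s.length + j ≤ i → i < mt.1 → q.2 i = mt.2 i} := by
    intro j n
    set b : ℕ := s.length + j with hbdef
    set φ : Hechler → ℕ × List ℕ := fun q =>
      (max (Mf q) b, (List.range (max (Mf q) b)).map (fun i => if b ≤ i then q.2 i else 0))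
      with hφdef
    obtain ⟨⟨m, L⟩, hmL⟩ := pigeon (Xfun j) φ (hks1 n) (by rw [hX2 j]; exact hks2 n)
    have hks0 : (0 : Cardinal) < ks n :=
      lt_of_lt_of_le (aleph0_pos) ((hks1 n).le.trans (Ordinal.cof_ord_le _))
    have hne : {q | q ∈ Xfun j ∧ φ q = (m, L)}.Nonempty := by
      by_contra hemp
      rw [Set.not_nonempty_iff_eq_empty] at hemp
      rw [hemp] at hmL
      have hz : #((∅ : Set Hechler)) = 0 := mk_emptyCollection _
      rw [hz] at hmL
      exact hks0.ne' (le_antisymm hmL zero_le)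
    obtain ⟨q0, hq0X, hq0φ⟩ := hne
    have hmb : b ≤ m := by
      have h1 : max (Mf q0) b = m := congrArg Prod.fst hq0φ
      omega
    refine ⟨(m, fun i => L.getD i 0), hmb, hmL.trans (mk_le_mk_of_subset ?_)⟩
    rintro q ⟨hqX, hqφ⟩
    have h1 : max (Mf q) b = m := congrArg Prod.fst hqφ
    have h2 : (List.range (max (Mf q) b)).map (fun i => if b ≤ i then q.2 i else 0) = L :=
      congrArg Prod.snd hqφ
    refine ⟨hqX, by omega, fun i hbi him => ?_⟩
    have h3 : L.getD i 0 = if b ≤ i then q.2 i else 0 := by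
      rw [← h2, getD_map_range _ _ _ (by omega)]
    simp only [h3, if_pos hbi]
  choose bat hbat1 hbat2 using hbatch
  -- Step 8 : the j recursion
  let jfun : ℕ → ℕ := fun n => Nat.rec 0 (fun k ih => (bat ih k).1 - s.length) n
  have hjfun : ∀ n, jfun (n + 1) = (bat (jfun n) n).1 - s.length := fun _ => rfl
  set base : ℕ → ℕ := fun n => s.length + jfun n with hbasedef
  have hbase1 : ∀ n, base n ≤ (bat (jfun n) n).1 := fun n => hbat1 _ n
  have hbase2 : ∀ n, base (n + 1) = (bat (jfun n) n).1 := by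
    intro n
    have h1 := hbat1 (jfun n) n
    have h2 := hjfun n
    simp only [hbasedef]
    omega
  have hbmono : Monotone base := monotone_nat_of_le_succ (fun n => by
    rw [hbase2]; exact hbase1 n)
  set Bn : ℕ → Set Hechler := fun n => {q | q ∈ Xfun (jfun n) ∧ Mf q ≤ (bat (jfun n) n).1 ∧
      ∀ i, base n ≤ i → i < (bat (jfun n) n).1 → q.2 i = (bat (jfun n) n).2 i} with hBdef
  have hBcard : ∀ n, ks n ≤ #(Bn n) := fun n => hbat2 _ n
  -- Step 9 : the condition p
  have huniq : ∀ {n n' i : ℕ}, base n ≤ i → i < base (n + 1) → base n' ≤ i → i < base (n' + 1) →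
      n = n' := by
    intro n n' i h1 h2 h3 h4
    by_contra hne
    rcases Nat.lt_or_ge n n' with h | h
    · have h5 : base (n + 1) ≤ base n' := hbmono (Nat.succ_le_of_lt h)
      omega
    · have hlt : n' < n := by omega
      have h5 : base (n' + 1) ≤ base n := hbmono (Nat.succ_le_of_lt hlt)
      omega
  set tval : ℕ → ℕ := fun i =>
    if hx : ∃ n, base n ≤ i ∧ i < base (n + 1) then (bat (jfun hx.choose) hx.choose).2 i else 0
    with htvaldef
  have htvalspec : ∀ n i, base n ≤ i → i < base (n + 1) → tval i = (bat (jfun n) n).2 i := by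
    intro n i h1 h2
    have hx : ∃ k, base k ≤ i ∧ i < base (k + 1) := ⟨n, h1, h2⟩
    simp only [htvaldef]
    rw [dif_pos hx]
    have hspec := hx.choose_spec
    have heq : hx.choose = n := huniq hspec.1 hspec.2 h1 h2
    rw [heq]
  set hfun : ℕ → ℕ := fun i =>
    max (g i) (max (if s.length ≤ i then cval (i - s.length) else 0) (tval i)) with hfundef
  refine ⟨(s, hfun), ?_⟩
  have hsub : ∀ n, Bn n ⊆ {q : Hechler | q ∈ D ∧ HLe (s, hfun) q} := by
    intro n q hq
    obtain ⟨hqX, hqM, hqτ⟩ := hq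
    have hqEj : q ∈ Ej (cl (jfun n)) := hX1 _ hqX
    have hqE : q ∈ E := hqEj.1
    have hq1 : q.1 = s := hEs q hqE
    have hqXU : q ∈ ⋃ j, Xfun j := Set.mem_iUnion.2 ⟨jfun n, hqX⟩
    refine ⟨hED hqE, ?_, ?_, ?_⟩
    · rw [hq1]
    · intro i hi
      have hsi : s.length ≤ i := hi
      rcases lt_or_ge i (base n) with hib | hib
      · have hib' : i < s.length + jfun n := hib
        have hi' : i - s.length < jfun n := by omega
        have hc := hcvalspec (jfun n) q hqEj (i - s.length) hi'
        have hieq : s.length + (i - s.length) = i := by omega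
        rw [hieq] at hc
        rw [hc]
        refine le_trans ?_ (le_max_right (g i) _)
        refine le_trans ?_ (le_max_left _ (tval i))
        rw [if_pos hsi]
      · rcases lt_or_ge i (bat (jfun n) n).1 with him | him
        · have hq2 := hqτ i hib him
          have ht := htvalspec n i hib (by rw [hbase2]; exact him)
          rw [hq2, ← ht]
          exact le_trans (le_max_right _ _) (le_max_right _ _)
        · have := hMf q hqXU i (le_trans hqM him)
          exact le_trans this (le_max_left _ _)
    · intro i hi1 hi2
      rw [hq1] at hi1
      simp only [List.length] at hi2
      omega
  have hcap : (⨆ n, ks n) ≤ #{q : Hechler | q ∈ D ∧ HLe (s, hfun) q} := by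
    refine ciSup_le fun n => (hBcard n).trans (mk_le_mk_of_subset (hsub n))
  exact hks3.trans hcap

lemma HLe_refl (p : Hechler) : HLe p p :=
  ⟨List.prefix_refl _, fun _ _ => le_refl _, fun n h1 h2 => absurd h1 (by omega)⟩

/-- If 𝔟 > ℵ₁ then for every dense D ⊆ ℍ and uncountable κ < 𝔟 some
condition extends at least κ many members of D; consequently πNt(ℍ) ≥ 𝔟. -/
theorem stmt_13 (hb : aleph 1 < bNum) :
    (∀ D : Set Hechler, (∀ p : Hechler, ∃ q ∈ D, HLe q p) →
      ∀ κ : Cardinal, ℵ₀ < κ → κ < bNum →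
        ∃ p : Hechler, κ ≤ #{q : Hechler | q ∈ D ∧ HLe p q}) ∧
    bNum ≤ sInf {c : Cardinal | ∃ D : Set Hechler,
      (∀ p : Hechler, ∃ q ∈ D, HLe q p) ∧
      ∀ p : Hechler, #{q : Hechler | q ∈ D ∧ HLe p q} < c} := by
  constructor
  · intro D hD κ hκ0 hκb
    exact main_capture D hD κ hκ0 hκb
  · have hne : {c : Cardinal | ∃ D : Set Hechler,
        (∀ p : Hechler, ∃ q ∈ D, HLe q p) ∧
        ∀ p : Hechler, #{q : Hechler | q ∈ D ∧ HLe p q} < c}.Nonempty := by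
      refine ⟨Order.succ #Hechler, Set.univ, fun p => ⟨p, trivial, HLe_refl p⟩, fun p => ?_⟩
      exact lt_of_le_of_lt (mk_set_le _) (Order.lt_succ _)
    refine le_csInf hne ?_
    rintro c ⟨D, hD, hcap⟩
    by_contra hlt
    have hc : c < bNum := not_le.1 hlt
    have hκb : max c (aleph 1) < bNum := max_lt hc hb
    have hκ0 : ℵ₀ < max c (aleph 1) :=
      lt_of_lt_of_le aleph0_lt_aleph_one (le_max_right _ _)
    obtain ⟨p, hp⟩ := main_capture D hD _ hκ0 hκb
    exact absurd (hcap p) (not_lt.2 (le_trans (le_max_left _ _) hp))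
end

section
/- If λ is an infinite cardinal with λ^{<κ} = λ for a regular cardinal κ ≤ λ, then the Very Weak Square principle VWS(λ, κ, κ) holds: there is a sequence ⟨C_α : α < λ⁺⟩ and a club D ⊆ λ⁺ such that for each α ∈ D with cf(α) ≥ κ, C_α is a cofinal subset of α ∩ D of order type cf(α), and for each X ∈ [C_α]^{<κ} there is ξ < α with X ⊆ C_ξ and C_ξ ∈ [C_α]^{<κ}. -/
open Cardinal

set_option linter.deprecated false

namespace Stmt18Aux

lemma type_lt_Iio (o : Ordinal.{0}) :
    Ordinal.type ((· < ·) : Set.Iio o → Set.Iio o → Prop) = Ordinal.lift.{1} o :=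
  Ordinal.type_lt_Iio o

lemma bdd_of_mk_lt_cof {α : Ordinal.{0}} {X : Set Ordinal.{0}} (hX : ∀ x ∈ X, x < α)
    (hc : #X < Cardinal.lift.{1} α.cof) : ∃ β < α, ∀ x ∈ X, x < β := by
  by_contra h
  push_neg at h
  have hub : IsCofinal
      {y : Set.Iio α | y.1 ∈ X} := by
    intro a
    obtain ⟨x, hxX, hax⟩ := h a.1 a.2
    exact ⟨⟨x, hX x hxX⟩, hxX, hax⟩
  have h1 := Order.cof_le hub
  rw [Ordinal.cof_Iio] at h1
  have h3 : #{y : Set.Iio α | y.1 ∈ X} = #X :=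
    Cardinal.mk_congr
      ⟨fun y => ⟨y.1.1, y.2⟩, fun x => ⟨⟨x.1, hX x.1 x.2⟩, x.2⟩, fun _ => rfl, fun _ => rfl⟩
  rw [h3, ← Ordinal.lift_cof] at h1
  exact absurd h1 hc.not_ge

open Classical in
/-- The `C` sequence. -/
noncomputable def VWSC (θ : Ordinal.{0}) (sfun : Ordinal.{0} → Ordinal.{0} → Set Ordinal.{0})
    (fseq : ∀ ρ : Ordinal.{0}, ∀ b < ρ.cof.ord, Ordinal.{0}) (ξ : Ordinal.{0}) :
    Set Ordinal.{0} :=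
  if h : ξ % θ = 0 ∧ Order.IsSuccLimit (ξ / θ) then
    Set.range (fun i : Set.Iio ((ξ / θ).cof.ord) => θ * (fseq (ξ / θ) i.1 i.2 + 1) + 1)
  else sfun (ξ / θ) (Ordinal.pred (ξ % θ))

end Stmt18Aux

open Stmt18Aux

/-- If λ^{<κ} = λ with κ ≤ λ regular, then the Very Weak Square
principle VWS(λ, κ, κ) holds: there is a sequence ⟨C_α : α < λ⁺⟩ and a club D ⊆ λ⁺
such that for each α ∈ D of cofinality ≥ κ, C_α is cofinal in α ∩ D of order type
cf(α), and every (<κ)-sized subset of C_α is covered by some C_ξ (ξ < α) which is a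
(<κ)-sized subset of C_α. -/
theorem stmt_18 (lam κ : Cardinal.{0}) (hκ : κ.IsRegular) (hκlam : κ ≤ lam)
    (hlam : ℵ₀ ≤ lam) (hpow : lam ^< κ = lam) :
    ∃ (C : Ordinal.{0} → Set Ordinal.{0}) (D : Set Ordinal.{0}),
      -- D is a subset of λ⁺ = ord of the successor cardinal of λ
      (∀ β ∈ D, β < (Order.succ lam).ord) ∧
      -- D is closed in λ⁺: limit points below λ⁺ of D belong to D
      (∀ α < (Order.succ lam).ord, Order.IsSuccLimit α →
        (∀ β < α, ∃ γ ∈ D, β < γ ∧ γ < α) → α ∈ D) ∧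
      -- D is unbounded in λ⁺
      (∀ α < (Order.succ lam).ord, ∃ β ∈ D, α < β) ∧
      -- the VWS properties at every α ∈ D of cofinality ≥ κ
      (∀ α ∈ D, κ ≤ α.cof →
        (C α ⊆ D ∧ (∀ ξ ∈ C α, ξ < α) ∧
          (∀ β < α, ∃ ξ ∈ C α, β ≤ ξ) ∧
          Ordinal.type ((· < ·) : C α → C α → Prop) = Ordinal.lift.{1} α.cof.ord ∧
          (∀ X : Set Ordinal, X ⊆ C α → #X < Cardinal.lift.{1} κ →
            ∃ ξ < α, X ⊆ C ξ ∧ C ξ ⊆ C α ∧ #(C ξ) < Cardinal.lift.{1} κ))) := by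
  classical
  have hκ0 : ℵ₀ ≤ κ := hκ.1
  set θ : Ordinal.{0} := lam.ord with hθdef
  set μ : Ordinal.{0} := (Order.succ lam).ord with hμdef
  have hθlim : Order.IsSuccLimit θ := Cardinal.isSuccLimit_ord hlam
  have hθpos : 0 < θ := hθlim.pos
  have hθne : θ ≠ 0 := hθpos.ne'
  have hκpos : (0 : Cardinal.{1}) < Cardinal.lift.{1} κ := by
    have : (0 : Cardinal.{0}) < κ := aleph0_pos.trans_le hκ0
    simpa using Cardinal.lift_lt.{0,1}.2 this
  -- the club D
  set D : Set Ordinal.{0} :=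
    {ξ | ξ < μ ∧ (ξ % θ = 0 ∧ Order.IsSuccLimit (ξ / θ) ∨ ∃ δ, ξ = θ * δ + 1)} with hDdef
  -- block surjections
  have block : ∀ δ : Ordinal.{0}, ∃ s : Ordinal.{0} → Set Ordinal.{0},
      (θ * (δ + 1)).card ≤ lam →
      ∀ X : Set Ordinal.{0}, X ⊆ Set.Iio (θ * (δ + 1)) → #X < Cardinal.lift.{1} κ →
        ∃ i < θ, s i = X := by
    intro δ
    by_cases hb : (θ * (δ + 1)).card ≤ lam
    swap
    · exact ⟨fun _ => ∅, fun h => absurd h hb⟩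
    set b : Ordinal.{0} := θ * (δ + 1) with hbdef
    have hIiob : #(Set.Iio b) ≤ Cardinal.lift.{1} lam := by
      rw [Ordinal.mk_Iio_ordinal]
      exact Cardinal.lift_le.2 hb
    have key : ∀ c : Cardinal.{1}, c < Cardinal.lift.{1} κ →
        #{t : Set Ordinal.{0} // t ⊆ Set.Iio b ∧ #t ≤ c} ≤ Cardinal.lift.{1} lam := by
      intro c hc
      obtain ⟨c0, hc0κ, rfl⟩ := Cardinal.lt_lift_iff.1 hc
      calc #{t : Set Ordinal.{0} // t ⊆ Set.Iio b ∧ #t ≤ Cardinal.lift.{1} c0}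
          ≤ max #(Set.Iio b) ℵ₀ ^ Cardinal.lift.{1} c0 :=
            Cardinal.mk_bounded_subset_le _ _
        _ ≤ (Cardinal.lift.{1} lam) ^ (Cardinal.lift.{1} c0) :=
            Cardinal.power_le_power_right
              (max_le hIiob (Cardinal.aleph0_le_lift.2 hlam))
        _ = Cardinal.lift.{1} (lam ^ c0) := (Cardinal.lift_power _ _).symm
        _ ≤ Cardinal.lift.{1} (lam ^< κ) :=
            Cardinal.lift_le.2 (Cardinal.le_powerlt lam hc0κ)
        _ = Cardinal.lift.{1} lam := by rw [hpow]
    set T := {t : Set Ordinal.{0} // t ⊆ Set.Iio b ∧ #t < Cardinal.lift.{1} κ} with hTdef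
    have hT : #T ≤ Cardinal.lift.{1} lam := by
      set B : Set.Iio κ.ord → Type 1 :=
        fun i => {t : Set Ordinal.{0} // t ⊆ Set.Iio b ∧ #t ≤ Cardinal.lift.{1} (i.1).card}
        with hBdef
      have idx : ∀ X : T, {i : Set.Iio κ.ord // #X.1 = Cardinal.lift.{1} (i.1).card} := by
        intro X
        have hx := X.2.2
        have hex := Cardinal.lt_lift_iff.1 hx
        refine ⟨⟨(Classical.choose hex).ord, ?_⟩, ?_⟩
        · exact Cardinal.ord_lt_ord.2 (Classical.choose_spec hex).1
        · rw [Cardinal.card_ord]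
          exact ((Classical.choose_spec hex).2).symm
      have hFinj : Function.Injective (fun X : T =>
          (⟨(idx X).1, ⟨X.1, X.2.1, le_of_eq (idx X).2⟩⟩ : Σ i : Set.Iio κ.ord, B i)) := by
        intro a b h
        exact Subtype.ext (congrArg (fun p : Σ i : Set.Iio κ.ord, B i => (p.2.1 : Set Ordinal.{0})) h)
      calc #T ≤ #(Σ i : Set.Iio κ.ord, B i) := Cardinal.mk_le_of_injective hFinj
        _ = Cardinal.sum (fun i : Set.Iio κ.ord => #(B i)) := Cardinal.mk_sigma _
        _ ≤ Cardinal.sum (fun _ : Set.Iio κ.ord => Cardinal.lift.{1} lam) := by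
            apply Cardinal.sum_le_sum
            intro i
            apply key
            have : (i.1).card < κ := Cardinal.lt_ord.1 i.2
            simpa using Cardinal.lift_lt.{0,1}.2 this
        _ = #(Set.Iio κ.ord) * Cardinal.lift.{1} lam := Cardinal.sum_const' _ _
        _ = Cardinal.lift.{1} κ * Cardinal.lift.{1} lam := by
            rw [Ordinal.mk_Iio_ordinal, Cardinal.card_ord]
        _ = Cardinal.lift.{1} (κ * lam) := (Cardinal.lift_mul _ _).symm
        _ = Cardinal.lift.{1} lam := by
            rw [Cardinal.mul_eq_max hκ0 (hκ0.trans hκlam), max_eq_right hκlam]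
    have hTθ : #T ≤ #(Set.Iio θ) := by
      rw [Ordinal.mk_Iio_ordinal, Cardinal.card_ord]
      exact hT
    obtain ⟨emb⟩ := (Cardinal.le_def _ _).1 hTθ
    haveI : Nonempty T := ⟨⟨∅, by simp, by simpa using hκpos⟩⟩
    refine ⟨fun i => if h : i < θ then (Function.invFun emb ⟨i, h⟩).1 else ∅, fun _ X hXb hXs => ?_⟩
    obtain ⟨i, hi⟩ := Function.invFun_surjective emb.injective (⟨X, hXb, hXs⟩ : T)
    refine ⟨i.1, i.2, ?_⟩
    show (if h : (i : Ordinal.{0}) < θ then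
        ((Function.invFun ⇑emb ⟨(i : Ordinal.{0}), h⟩ : T) : Set Ordinal.{0}) else ∅) = X
    rw [dif_pos (show (i : Ordinal.{0}) < θ from i.2)]
    exact congrArg Subtype.val hi
  choose sfun hsfun using block
  choose fseq hfseq using fun ρ : Ordinal.{0} => Ordinal.exists_fundamental_sequence ρ
  refine ⟨VWSC θ sfun fseq, D, fun β hβ => hβ.1, ?_, ?_, ?_⟩
  · -- closedness
    intro α hαμ hαlim H
    have hmul : ∀ β < α, ∃ δ, β < θ * δ ∧ θ * δ < α := by
      intro β hβ
      obtain ⟨γ, hγD, hβγ, hγα⟩ := H (β + 1) (by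
        rw [Ordinal.add_one_eq_succ]; exact hαlim.succ_lt hβ)
      rcases hγD.2 with ⟨hm, _⟩ | ⟨δ, rfl⟩
      · refine ⟨γ / θ, ?_, ?_⟩
        · have hda : θ * (γ / θ) + γ % θ = γ := Ordinal.div_add_mod γ θ
          rw [hm, add_zero] at hda
          rw [hda]
          exact lt_trans (by rw [Ordinal.add_one_eq_succ]; exact Order.lt_succ β) hβγ
        · have hda : θ * (γ / θ) + γ % θ = γ := Ordinal.div_add_mod γ θ
          rw [hm, add_zero] at hda
          rw [hda]; exact hγα
      · refine ⟨δ, ?_, lt_trans (by rw [Ordinal.add_one_eq_succ]; exact Order.lt_succ _) hγα⟩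
        rw [Ordinal.add_one_eq_succ, Ordinal.add_one_eq_succ] at hβγ
        exact Order.succ_lt_succ_iff.1 hβγ
    have hda : θ * (α / θ) + α % θ = α := Ordinal.div_add_mod α θ
    have hmod : α % θ = 0 := by
      by_contra hr
      have h1 : θ * (α / θ) < α := by
        conv_rhs => rw [← hda]
        have : (0 : Ordinal.{0}) < α % θ := pos_iff_ne_zero.2 hr
        calc θ * (α / θ) = θ * (α / θ) + 0 := (add_zero _).symm
          _ < θ * (α / θ) + α % θ := add_lt_add_right this _
      obtain ⟨δ, h2, h3⟩ := hmul _ h1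
      have h4 : α / θ < δ := (Ordinal.isNormal_mul_right hθpos).strictMono.lt_iff_lt.1 h2
      have h5 : θ * (α / θ + 1) ≤ θ * δ := by
        apply mul_le_mul_right
        rw [Ordinal.add_one_eq_succ]
        exact Order.succ_le_of_lt h4
      have h6 : α < θ * (α / θ + 1) := by
        rw [Ordinal.add_one_eq_succ]
        exact Ordinal.lt_mul_succ_div α hθne
      exact absurd (h6.trans_le (h5.trans h3.le)) (lt_irrefl α)
    have hα' : θ * (α / θ) = α := by
      conv_rhs => rw [← hda]
      rw [hmod, add_zero]
    have hqlim : Order.IsSuccLimit (α / θ) := by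
      rcases Ordinal.zero_or_succ_or_isSuccLimit (α / θ) with h0 | ⟨p, hp⟩ | hl
      · exfalso
        rw [h0, mul_zero] at hα'
        exact hαlim.pos.ne' hα'.symm
      · exfalso
        have hpα : θ * p < α := by
          rw [← hα', ← hp, Ordinal.mul_succ]
          calc θ * p = θ * p + 0 := (add_zero _).symm
            _ < θ * p + θ := add_lt_add_right hθpos _
        obtain ⟨δ, h2, h3⟩ := hmul _ hpα
        have h4 : p < δ := (Ordinal.isNormal_mul_right hθpos).strictMono.lt_iff_lt.1 h2
        have h5 : θ * Order.succ p ≤ θ * δ := mul_le_mul_right (Order.succ_le_of_lt h4) _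
        rw [hp, hα'] at h5
        exact absurd (h5.trans_lt h3) (lt_irrefl α)
      · exact hl
    exact ⟨hαμ, Or.inl ⟨hmod, hqlim⟩⟩
  · -- unboundedness
    intro α hαμ
    refine ⟨θ * (α + 1) + 1, ⟨?_, Or.inr ⟨α + 1, rfl⟩⟩, ?_⟩
    · rw [hμdef, Cardinal.lt_ord, Order.lt_succ_iff]
      have h1 : α.card ≤ lam := by
        have := Cardinal.lt_ord.1 hαμ
        rwa [Order.lt_succ_iff] at this
      have h2 : (θ * (α + 1) + 1).card = lam * (α.card + 1) + 1 := by
        rw [Ordinal.card_add, Ordinal.card_mul, Ordinal.card_add, Ordinal.card_one, hθdef,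
          Cardinal.card_ord]
      rw [h2]
      have h3 : α.card + 1 ≤ lam := by
        calc α.card + 1 ≤ lam + 1 := add_le_add_left h1 1
          _ = lam := Cardinal.add_one_eq hlam
      calc lam * (α.card + 1) + 1 ≤ lam * lam + 1 := by
            exact add_le_add_left (mul_le_mul_right h3 lam) 1
        _ = lam + 1 := by rw [Cardinal.mul_eq_self hlam]
        _ = lam := Cardinal.add_one_eq hlam
    · have h1 : α + 1 ≤ θ * (α + 1) := Ordinal.le_mul_right _ hθpos
      have h2 : α < α + 1 := by rw [Ordinal.add_one_eq_succ]; exact Order.lt_succ α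
      exact lt_of_lt_of_le (h2.trans_le h1) (le_self_add)
  · -- VWS properties
    intro α hαD hcofα
    obtain ⟨hαμ, hcase⟩ := hαD
    rcases hcase with ⟨hmod, hqlim⟩ | ⟨δ0, rfl⟩
    swap
    · exfalso
      rw [Ordinal.add_one_eq_succ, Ordinal.cof_succ] at hcofα
      exact absurd (hκ0.trans hcofα) Cardinal.one_lt_aleph0.not_ge
    have hda : θ * (α / θ) + α % θ = α := Ordinal.div_add_mod α θ
    have hα' : θ * (α / θ) = α := by
      conv_rhs => rw [← hda]
      rw [hmod, add_zero]
    have hcofeq : α.cof = (α / θ).cof := by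
      conv_lhs => rw [← hα']
      exact Ordinal.cof_map_of_isNormal (Ordinal.isNormal_mul_right hθpos) hqlim
    have hfs := hfseq (α / θ)
    set c : Ordinal.{0} := (α / θ).cof.ord with hcdef
    set u : Set.Iio c → Ordinal.{0} :=
      fun i => θ * (fseq (α / θ) i.1 i.2 + 1) + 1 with hudef
    have hflt : ∀ (i) (hi : i < c), fseq (α / θ) i hi < α / θ := by
      intro i hi
      conv_rhs => rw [← hfs.2.2]
      exact Ordinal.lt_blsub _ _ _
    have hult : ∀ i : Set.Iio c, u i < α := by
      intro i
      have h1 : fseq (α / θ) i.1 i.2 + 1 < α / θ := by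
        rw [Ordinal.add_one_eq_succ]
        exact hqlim.succ_lt (hflt _ _)
      calc u i < θ * (fseq (α / θ) i.1 i.2 + 1) + θ :=
            add_lt_add_right (Ordinal.one_lt_of_isSuccLimit hθlim) _
        _ = θ * Order.succ (fseq (α / θ) i.1 i.2 + 1) := (Ordinal.mul_succ _ _).symm
        _ ≤ θ * (α / θ) := mul_le_mul_right (Order.succ_le_of_lt h1) _
        _ = α := hα'
    have hCα : VWSC θ sfun fseq α = Set.range u := by
      rw [VWSC, dif_pos ⟨hmod, hqlim⟩]
    rw [hCα]
    refine ⟨?_, ?_, ?_, ?_, ?_⟩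
    · rintro x ⟨i, rfl⟩
      exact ⟨(hult i).trans hαμ, Or.inr ⟨_, rfl⟩⟩
    · rintro x ⟨i, rfl⟩
      exact hult i
    · intro β hβ
      have hδβ : β / θ < α / θ := (Ordinal.div_lt hθne).2 (by rw [hα']; exact hβ)
      have : β / θ < Ordinal.blsub c (fseq (α / θ)) := by rw [hfs.2.2]; exact hδβ
      obtain ⟨i, hi, hfi⟩ := Ordinal.lt_blsub_iff.1 this
      refine ⟨u ⟨i, hi⟩, ⟨⟨i, hi⟩, rfl⟩, ?_⟩
      have h1 : β < θ * Order.succ (β / θ) := Ordinal.lt_mul_succ_div β hθne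
      have h2 : Order.succ (β / θ) ≤ fseq (α / θ) i hi + 1 := by
        rw [Ordinal.add_one_eq_succ]
        exact Order.succ_le_succ hfi
      have h3 : θ * Order.succ (β / θ) ≤ θ * (fseq (α / θ) i hi + 1) :=
        mul_le_mul_right h2 _
      exact le_of_lt (h1.trans_le (h3.trans (le_self_add)))
    · -- order type
      have hsm : StrictMono u := by
        intro i j hij
        have h1 : fseq (α / θ) i.1 i.2 < fseq (α / θ) j.1 j.2 := hfs.2.1 _ _ hij
        have h2 : fseq (α / θ) i.1 i.2 + 1 < fseq (α / θ) j.1 j.2 + 1 := by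
          rw [Ordinal.add_one_eq_succ, Ordinal.add_one_eq_succ]
          exact Order.succ_lt_succ h1
        have h3 := mul_lt_mul_of_pos_left h2 hθpos
        rw [hudef]
        dsimp only
        rw [Ordinal.add_one_eq_succ, Ordinal.add_one_eq_succ]
        exact Order.succ_lt_succ h3
      have hinj : Function.Injective u := hsm.injective
      have hiso : Ordinal.type ((· < ·) : Set.Iio c → Set.Iio c → Prop) =
          Ordinal.type ((· < ·) : Set.range u → Set.range u → Prop) := by
        refine Ordinal.type_eq.2 ⟨⟨Equiv.ofInjective u hinj, ?_⟩⟩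
        intro a b
        show u a < u b ↔ a < b
        exact hsm.lt_iff_lt
      rw [← hiso, type_lt_Iio, hcofeq]
    · -- covering
      intro X hXC hXκ
      have hXα : ∀ x ∈ X, x < α := by
        intro x hx
        obtain ⟨i, rfl⟩ := hXC hx
        exact hult i
      have hXcof : #X < Cardinal.lift.{1} α.cof := hXκ.trans_le (Cardinal.lift_le.2 hcofα)
      obtain ⟨β, hβα, hβbd⟩ := bdd_of_mk_lt_cof hXα hXcof
      set δ : Ordinal.{0} := β / θ with hδdef
      have hδρ : δ < α / θ := (Ordinal.div_lt hθne).2 (by rw [hα']; exact hβα)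
      have hb1 : θ * (δ + 1) ≤ α := by
        conv_rhs => rw [← hα']
        apply mul_le_mul_right
        rw [Ordinal.add_one_eq_succ]
        exact Order.succ_le_of_lt hδρ
      have hbcard : (θ * (δ + 1)).card ≤ lam := by
        have hblt : θ * (δ + 1) < μ := lt_of_le_of_lt hb1 hαμ
        rw [hμdef] at hblt
        have := Cardinal.lt_ord.1 hblt
        rwa [Order.lt_succ_iff] at this
      have hβb : β < θ * (δ + 1) := by
        rw [Ordinal.add_one_eq_succ]
        exact Ordinal.lt_mul_succ_div β hθne
      have hXb : X ⊆ Set.Iio (θ * (δ + 1)) := fun x hx => (hβbd x hx).trans hβb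
      obtain ⟨i, hiθ, hsi⟩ := hsfun δ hbcard X hXb hXκ
      have hi1θ : i + 1 < θ := by
        rw [Ordinal.add_one_eq_succ]
        exact hθlim.succ_lt hiθ
      have hCξ : VWSC θ sfun fseq (θ * δ + (i + 1)) = X := by
        have hmodξ : (θ * δ + (i + 1)) % θ = i + 1 := by
          rw [Ordinal.mul_add_mod_self, Ordinal.mod_eq_of_lt hi1θ]
        have hdivξ : (θ * δ + (i + 1)) / θ = δ := by
          rw [Ordinal.mul_add_div _ hθne, Ordinal.div_eq_zero_of_lt hi1θ, add_zero]
        rw [VWSC, dif_neg, hdivξ, hmodξ]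
        · rw [Ordinal.add_one_eq_succ, Ordinal.pred_succ]
          exact hsi
        · rintro ⟨h0, -⟩
          rw [hmodξ, Ordinal.add_one_eq_succ] at h0
          exact (Order.succ_ne_bot i) h0
      refine ⟨θ * δ + (i + 1), ?_, ?_, ?_, ?_⟩
      · calc θ * δ + (i + 1) < θ * δ + θ := add_lt_add_right hi1θ _
          _ = θ * Order.succ δ := (Ordinal.mul_succ _ _).symm
          _ = θ * (δ + 1) := by rw [Ordinal.add_one_eq_succ]
          _ ≤ α := hb1
      · rw [hCξ]
      · rw [hCξ]; exact hXC
      · rw [hCξ]; exact hXκ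
end
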